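/- Let A and Â be positive self-adjoint bounded operators on a Hilbert space and λ > 0. If ‖(A+λI)^{-1/2}(A−Â)(A+λI)^{-1/2}‖ ≤ 1/2, then ‖(A+λI)^{1/2}(Â+λI)^{-1/2}‖² ≤ 1/(1−‖(A+λI)^{-1/2}(A−Â)(A+λI)^{-1/2}‖) ≤ 2. -/

import Mathlib

/-- Let A, Â be positive self-adjoint bounded operators on a Hilbert space, λ > 0, with
S = (A+λI)^{1/2}, Ŝ = (Â+λI)^{1/2} (the positive square roots), Sinv = S⁻¹, Ŝinv = Ŝ⁻¹.
If `‖S⁻¹(A−Â)S⁻¹‖ ≤ 1/2` then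
`‖(A+λI)^{1/2}(Â+λI)^{-1/2}‖² ≤ 1/(1−‖S⁻¹(A−Â)S⁻¹‖) ≤ 2`. -/
theorem stmt_17 {H : Type*} [NormedAddCommGroup H] [InnerProductSpace ℂ H] [CompleteSpace H]
    (A Ah : H →L[ℂ] H) (hA : A.IsPositive) (hAh : Ah.IsPositive) (lam : ℝ) (hlam : 0 < lam)
    (S Sh Sinv Shinv : H →L[ℂ] H)
    (hSpos : S.IsPositive) (hS : S * S = A + (lam : ℂ) • (1 : H →L[ℂ] H))
    (hShpos : Sh.IsPositive) (hSh : Sh * Sh = Ah + (lam : ℂ) • (1 : H →L[ℂ] H))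
    (hSinv : S * Sinv = 1 ∧ Sinv * S = 1)
    (hShinv : Sh * Shinv = 1 ∧ Shinv * Sh = 1)
    (hsmall : ‖Sinv * (A - Ah) * Sinv‖ ≤ 1 / 2) :
    ‖S * Shinv‖ ^ 2 ≤ (1 - ‖Sinv * (A - Ah) * Sinv‖)⁻¹ ∧ ‖S * Shinv‖ ^ 2 ≤ 2 := by
  set E := Sinv * (A - Ah) * Sinv with hE
  set x := S * Shinv * (Shinv * S) with hx
  -- cancellation helpers
  have cSinvS : ∀ X : H →L[ℂ] H, Sinv * (S * X) = X := fun X => by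
    rw [← mul_assoc, hSinv.2, one_mul]
  have cSSinv : ∀ X : H →L[ℂ] H, S * (Sinv * X) = X := fun X => by
    rw [← mul_assoc, hSinv.1, one_mul]
  have cShShinv : ∀ X : H →L[ℂ] H, Sh * (Shinv * X) = X := fun X => by
    rw [← mul_assoc, hShinv.1, one_mul]
  have cShinvSh : ∀ X : H →L[ℂ] H, Shinv * (Sh * X) = X := fun X => by
    rw [← mul_assoc, hShinv.2, one_mul]
  -- 1 - E = Sinv * (Sh * Sh) * Sinv
  have h1 : (1 : H →L[ℂ] H) - E = Sinv * (Sh * Sh) * Sinv := by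
    have hone : (1 : H →L[ℂ] H) = Sinv * (S * S) * Sinv := by
      rw [mul_assoc, mul_assoc, cSinvS, hSinv.1]
    rw [hone, hE]
    have : Sinv * (S * S) * Sinv - Sinv * (A - Ah) * Sinv
        = Sinv * ((S * S) - (A - Ah)) * Sinv := by noncomm_ring
    rw [this, hS, hSh]
    congr 1
    congr 1
    abel
  -- x * (1 - E) = 1
  have hx2 : x * ((1 : H →L[ℂ] H) - E) = 1 := by
    rw [h1, hx]
    simp only [mul_assoc]
    rw [cSSinv, cShinvSh, cShinvSh, hSinv.1]
  -- norm of x equals ‖S * Shinv‖ ^ 2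
  have hstar : star (Shinv * S) = S * Shinv := by
    have hSsa : star S = S := hSpos.isSelfAdjoint
    have hShsa : star Sh = Sh := hShpos.isSelfAdjoint
    have hShinvsa : star Shinv = Shinv := by
      have h1 : star Shinv * Sh = 1 := by
        have := congrArg star hShinv.1
        rwa [star_mul, hShsa, star_one] at this
      calc star Shinv = star Shinv * (Sh * Shinv) := by rw [hShinv.1, mul_one]
        _ = (star Shinv * Sh) * Shinv := by rw [mul_assoc]
        _ = Shinv := by rw [h1, one_mul]
    rw [star_mul, hSsa, hShinvsa]
  have hns : ‖S * Shinv‖ = ‖Shinv * S‖ := by rw [← hstar, norm_star]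
  have hnx : ‖x‖ = ‖S * Shinv‖ ^ 2 := by
    rw [hx, ← hstar, CStarRing.norm_star_mul_self, norm_star, sq]
  -- bound ‖x‖
  have hxeq : x = 1 + x * E := by
    have h : x * (1 - E) = x - x * E := by noncomm_ring
    rw [h, sub_eq_iff_eq_add] at hx2
    exact hx2
  have hεnn : (0:ℝ) ≤ ‖E‖ := norm_nonneg _
  have hbound : ‖x‖ ≤ 1 + ‖x‖ * ‖E‖ := by
    calc ‖x‖ = ‖1 + x * E‖ := by rw [← hxeq]
      _ ≤ ‖(1 : H →L[ℂ] H)‖ + ‖x * E‖ := norm_add_le _ _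
      _ ≤ 1 + ‖x‖ * ‖E‖ := by
          have h1 : ‖(1 : H →L[ℂ] H)‖ ≤ 1 := by
            rw [ContinuousLinearMap.one_def]; exact ContinuousLinearMap.norm_id_le
          linarith [norm_mul_le x E]
  have hxle : ‖x‖ ≤ (1 - ‖E‖)⁻¹ := by
    rw [inv_eq_one_div, le_div_iff₀ (by linarith)]
    nlinarith
  constructor
  · rw [← hnx]; exact hxle
  · rw [← hnx]
    calc ‖x‖ ≤ (1 - ‖E‖)⁻¹ := hxle
      _ ≤ 2 := by
        rw [inv_eq_one_div, div_le_iff₀ (by linarith)]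
        linarith
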